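/- arXiv:math/9810182 — 2 statements merged into one kernel-verified Lean document; each statement's English description precedes it below -/
import Mathlib

section
/- Let q be an odd prime and let χ = χ_q be the Legendre symbol modulo q. Let r, m, m₁, m₂ be integers with q ∤ r and q | m m₁ m₂. Then H_r(m, m₁, m₂; q) = R(m; q) R(m₁; q) R(m₂; q) / (q − 1), where R(n; q) = Σ_{d mod q, gcd(d, q) = 1} e_q(d n) is the Ramanujan sum. -/
/-- `e_c(x) = exp(2πix/c)`. -/
noncomputable def ec (c : ℕ) (x : ℤ) : ℂ :=
  Complex.exp (2 * Real.pi * Complex.I * x / c)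

/-- The Kloosterman sum `S(m, n; c) = Σ_{a d ≡ 1 (mod c)} e_c(a m + d n)`. -/
noncomputable def kloos (m n : ℤ) (c : ℕ) : ℂ :=
  ∑ a ∈ Finset.range c, ∑ d ∈ Finset.range c,
    if (a * d) % c = 1 % c then ec c (a * m + d * n) else 0

/-- `G(m, m₁, m₂; c)` : complete sum of Kloosterman sums twisted by `χ_q`, for `q ∣ c`. -/
noncomputable def Gsum (q : ℕ) (m m1 m2 : ℤ) (c : ℕ) : ℂ :=
  ∑ a ∈ Finset.range c, ∑ a1 ∈ Finset.range c, ∑ a2 ∈ Finset.range c,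
    (jacobiSym ((a : ℤ) * a1 * a2) q : ℂ) * kloos a ((a1 : ℤ) * a2) c *
      ec c (a * m + a1 * m1 + a2 * m2)

/-- `G'(m, m₁, m₂; c) = e_c(−m m₁ m₂) G(m, m₁, m₂; c)`. -/
noncomputable def Gsum' (q : ℕ) (m m1 m2 : ℤ) (c : ℕ) : ℂ :=
  ec c (-(m * m1 * m2)) * Gsum q m m1 m2 c

/-- `H_r(m, m₁, m₂; q) = Σ_{u,v mod q} χ_q(v (u + v m₁)(v r − m)(u r + m m₁)) e_q(u m₂)`. -/
noncomputable def Hr (r m m1 m2 : ℤ) (q : ℕ) : ℂ :=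
  ∑ u ∈ Finset.range q, ∑ v ∈ Finset.range q,
    (jacobiSym ((v : ℤ) * ((u : ℤ) + v * m1) * ((v : ℤ) * r - m) * ((u : ℤ) * r + m * m1)) q : ℂ) *
      ec q (u * m2)

/-- `H(w; q) = Σ_{u,v mod q} χ_q(u v (u+1)(v+1)) e_q((u v − 1) w)`. -/
noncomputable def Hw (w : ℤ) (q : ℕ) : ℂ :=
  ∑ u ∈ Finset.range q, ∑ v ∈ Finset.range q,
    (jacobiSym ((u : ℤ) * v * ((u : ℤ) + 1) * ((v : ℤ) + 1)) q : ℂ) *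
      ec q (((u : ℤ) * v - 1) * w)

/-- Reduced sum `H*(w; q)`, restricted by `gcd(uv − 1, q) = 1`. -/
noncomputable def Hstar (w : ℤ) (q : ℕ) : ℂ :=
  ∑ u ∈ Finset.range q, ∑ v ∈ Finset.range q,
    if Int.gcd ((u : ℤ) * v - 1) q = 1 then
      (jacobiSym ((u : ℤ) * v * ((u : ℤ) + 1) * ((v : ℤ) + 1)) q : ℂ) *
        ec q (((u : ℤ) * v - 1) * w)
    else 0

/-- The Ramanujan sum `R(n; k) = Σ_{d mod k, (d,k)=1} e_k(d n)`. -/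
noncomputable def Ram (n : ℤ) (k : ℕ) : ℂ :=
  ∑ d ∈ Finset.range k, if Nat.gcd d k = 1 then ec k (d * n) else 0

/-- The Gauss sum `τ(χ_q) = Σ_{x mod q} χ_q(x) e_q(x)`. -/
noncomputable def gaussτ (q : ℕ) : ℂ :=
  ∑ x ∈ Finset.range q, (jacobiSym (x : ℤ) q : ℂ) * ec q (x : ℤ)


section Aux

open Finset

lemma ec_add {q : ℕ} (hq : q ≠ 0) (x y : ℤ) : ec q (x + y) = ec q x * ec q y := by
  have : (q:ℂ) ≠ 0 := Nat.cast_ne_zero.mpr hq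
  rw [ec, ec, ec, ← Complex.exp_add]
  congr 1
  push_cast
  field_simp

lemma ec_dvd {q : ℕ} (hq : q ≠ 0) {x : ℤ} (h : (q:ℤ) ∣ x) : ec q x = 1 := by
  obtain ⟨k, rfl⟩ := h
  have hq' : (q:ℂ) ≠ 0 := Nat.cast_ne_zero.mpr hq
  rw [ec]
  have : 2 * (Real.pi:ℂ) * Complex.I * (↑(↑q * k)) / q = k * (2 * Real.pi * Complex.I) := by
    push_cast; field_simp
  rw [this, Complex.exp_int_mul_two_pi_mul_I]

lemma ec_congr {q : ℕ} (hq : q ≠ 0) {x y : ℤ} (h : (q:ℤ) ∣ x - y) : ec q x = ec q y := by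
  have : x = (x - y) + y := by ring
  rw [this, ec_add hq, ec_dvd hq h, one_mul]

/-- The standard additive character of `ZMod q`. -/
noncomputable def psi (q : ℕ) (a : ZMod q) : ℂ := ec q (a.val : ℤ)

lemma ec_eq_psi {q : ℕ} [NeZero q] (x : ℤ) : ec q x = psi q (x : ZMod q) := by
  rw [psi]
  refine ec_congr (NeZero.ne q) ?_
  rw [← ZMod.intCast_zmod_eq_zero_iff_dvd]
  push_cast
  simp [ZMod.intCast_cast]

lemma psi_add {q : ℕ} [NeZero q] (a b : ZMod q) : psi q (a + b) = psi q a * psi q b := by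
  have h1 : psi q (a+b) = ec q ((a.val : ℤ) + b.val) := by
    rw [psi]
    refine ec_congr (NeZero.ne q) ?_
    rw [← ZMod.intCast_zmod_eq_zero_iff_dvd]
    push_cast [ZMod.natCast_val, ZMod.cast_id]
    ring
  rw [h1, ec_add (NeZero.ne q)]; rfl

lemma psi_zero (q : ℕ) : psi q 0 = 1 := by
  simp [psi, ec, ZMod.val_zero]

lemma psi_one_ne_one {q : ℕ} (hq : 1 < q) : psi q 1 ≠ 1 := by
  have : NeZero q := ⟨by omega⟩
  have : Fact (1 < q) := ⟨hq⟩
  rw [psi, ZMod.val_one q, ec]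
  intro h
  rw [Complex.exp_eq_one_iff] at h
  obtain ⟨n, hn⟩ := h
  have hq' : (q:ℂ) ≠ 0 := Nat.cast_ne_zero.mpr (by omega)
  have h2 : (2 * (Real.pi:ℂ) * Complex.I) ≠ 0 := by
    simp [Real.pi_ne_zero, Complex.I_ne_zero]
  have h3 : ((1:ℤ):ℂ) = ((n * q : ℤ):ℂ) := by
    push_cast
    have : ((1:ℕ):ℂ) / q * (2 * Real.pi * Complex.I) = n * (2 * Real.pi * Complex.I) := by
      rw [← hn]; ring
    have := mul_right_cancel₀ h2 this
    push_cast at this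
    field_simp at this
    linear_combination this
  have h4 : (1:ℤ) = n * q := by exact_mod_cast h3
  have h5 : (q:ℤ) ∣ 1 := ⟨n, by linarith [h4]⟩
  have := Int.le_of_dvd one_pos h5
  omega

variable {q : ℕ} [Fact q.Prime]

lemma sum_psi : ∑ a : ZMod q, psi q a = 0 := by
  have hq : 1 < q := (Fact.out : q.Prime).one_lt
  have h1 : psi q 1 * ∑ a : ZMod q, psi q a = ∑ a : ZMod q, psi q a := by
    rw [Finset.mul_sum]
    refine Fintype.sum_bijective (fun a => 1 + a) (Equiv.addLeft (1 : ZMod q)).bijective _ _ ?_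
    intro a; rw [psi_add]
  have h2 : (psi q 1 - 1) * ∑ a : ZMod q, psi q a = 0 := by rw [sub_mul, one_mul, h1, sub_self]
  rcases mul_eq_zero.mp h2 with h | h
  · exact absurd (sub_eq_zero.mp h) (psi_one_ne_one hq)
  · exact h

lemma sum_psi_mul (M : ZMod q) :
    ∑ a : ZMod q, psi q (a * M) = if M = 0 then (q:ℂ) else 0 := by
  split_ifs with h
  · subst h; simp only [mul_zero, psi_zero, Finset.sum_const, Finset.card_univ, ZMod.card,
      nsmul_eq_mul, mul_one]
  · rw [← sum_psi (q := q)]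
    exact Fintype.sum_bijective (fun a => a * M) (mulRight_bijective₀ M h) _ _ (fun a => rfl)

/-- The quadratic character of `ZMod q`, valued in `ℂ`. -/
noncomputable def Chi (q : ℕ) [Fact q.Prime] (a : ZMod q) : ℂ :=
  ((quadraticChar (ZMod q) a : ℤ) : ℂ)

lemma jacobi_eq_chi (x : ℤ) : (jacobiSym x q : ℂ) = Chi q (x : ZMod q) := by
  rw [← jacobiSym.legendreSym.to_jacobiSym]; rfl

lemma Chi_mul (a b : ZMod q) : Chi q (a * b) = Chi q a * Chi q b := by
  simp [Chi, map_mul]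

lemma Chi_zero : Chi q (0 : ZMod q) = 0 := by simp [Chi]

lemma Chi_one : Chi q (1 : ZMod q) = 1 := by simp [Chi]

lemma Chi_sq {a : ZMod q} (ha : a ≠ 0) : Chi q a * Chi q a = 1 := by
  have := quadraticChar_sq_one ha
  rw [sq] at this
  simp only [Chi, ← Int.cast_mul, this, Int.cast_one]

lemma Chi_sq_mul {a : ZMod q} (ha : a ≠ 0) (x : ZMod q) : Chi q (a * a * x) = Chi q x := by
  rw [Chi_mul, Chi_mul, Chi_sq ha, one_mul]

lemma sum_Chi (hq2 : q ≠ 2) : ∑ a : ZMod q, Chi q a = 0 := by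
  have h : ringChar (ZMod q) ≠ 2 := by rw [ZMod.ringChar_zmod_n]; exact hq2
  have := quadraticChar_sum_zero h
  calc ∑ a : ZMod q, Chi q a = ((∑ a : ZMod q, quadraticChar (ZMod q) a : ℤ) : ℂ) := by
        push_cast [Chi]; rfl
    _ = 0 := by rw [this]; exact Int.cast_zero

lemma sum_Chi_shift (hq2 : q ≠ 2) (c : ZMod q) : ∑ a : ZMod q, Chi q (a + c) = 0 := by
  rw [← sum_Chi (q := q) hq2]
  exact (Fintype.sum_bijective (fun a : ZMod q => a + c) (Equiv.addRight c).bijective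
    (fun a => Chi q (a + c)) (Chi q) (fun a => rfl))

lemma sum_chi_quad (hq2 : q ≠ 2) (c : ZMod q) :
    ∑ u : ZMod q, Chi q (u * (u + c)) = if c = 0 then (q:ℂ) - 1 else -1 := by
  have hcard : ({0}ᶜ : Finset (ZMod q)).card = q - 1 := by
    simp [Finset.card_compl, ZMod.card]
  rw [Fintype.sum_eq_add_sum_compl 0, zero_mul, Chi_zero, zero_add]
  split_ifs with h
  · subst h
    have : ∀ u ∈ ({0}ᶜ : Finset (ZMod q)), Chi q (u * (u + 0)) = 1 := by
      intro u hu
      rw [add_zero, Chi_mul]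
      exact Chi_sq (Finset.notMem_singleton.mp (Finset.mem_compl.mp hu))
    rw [Finset.sum_congr rfl this, Finset.sum_const, hcard, nsmul_eq_mul, mul_one]
    have : (1:ℕ) ≤ q := (Fact.out : q.Prime).one_le
    push_cast [Nat.cast_sub this]
    ring
  · have step1 : ∀ u ∈ ({0}ᶜ : Finset (ZMod q)), Chi q (u * (u + c)) = Chi q (1 + c * u⁻¹) := by
      intro u hu
      have hu0 : u ≠ 0 := Finset.notMem_singleton.mp (Finset.mem_compl.mp hu)
      have : u * (u + c) = u * u * (1 + c * u⁻¹) := by field_simp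
      rw [this, Chi_sq_mul hu0]
    rw [Finset.sum_congr rfl step1]
    have step2 : ∑ u ∈ ({0}ᶜ : Finset (ZMod q)), Chi q (1 + c * u⁻¹)
        = ∑ w ∈ ({0}ᶜ : Finset (ZMod q)), Chi q (1 + w) := by
      refine Finset.sum_nbij' (fun u => c * u⁻¹) (fun w => c * w⁻¹) ?_ ?_ ?_ ?_ ?_
      · intro a ha
        have ha0 : a ≠ 0 := Finset.notMem_singleton.mp (Finset.mem_compl.mp ha)
        simp [Finset.mem_compl, mul_eq_zero, h, inv_eq_zero, ha0]
      · intro a ha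
        have ha0 : a ≠ 0 := Finset.notMem_singleton.mp (Finset.mem_compl.mp ha)
        simp [Finset.mem_compl, mul_eq_zero, h, inv_eq_zero, ha0]
      · intro a ha
        have ha0 : a ≠ 0 := Finset.notMem_singleton.mp (Finset.mem_compl.mp ha)
        field_simp
      · intro a ha
        have ha0 : a ≠ 0 := Finset.notMem_singleton.mp (Finset.mem_compl.mp ha)
        field_simp
      · intro a ha; rfl
    rw [step2]
    have step3 : ∑ w ∈ ({0}ᶜ : Finset (ZMod q)), Chi q (1 + w)
        = (∑ w : ZMod q, Chi q (1 + w)) - Chi q (1 + 0) := by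
      rw [Fintype.sum_eq_add_sum_compl 0 (fun w => Chi q (1 + w))]; ring
    rw [step3]
    have : ∑ w : ZMod q, Chi q (1 + w) = 0 := by
      rw [← sum_Chi_shift (q := q) hq2 1]
      exact Finset.sum_congr rfl (fun w _ => by rw [add_comm])
    rw [this, add_zero, Chi_one]
    ring

lemma sum_range_zmod {q : ℕ} [NeZero q] (f : ℕ → ℂ) :
    ∑ a ∈ Finset.range q, f a = ∑ a : ZMod q, f a.val := by
  refine Finset.sum_nbij' (fun a => (a : ZMod q)) (fun a => a.val) ?_ ?_ ?_ ?_ ?_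
  · intro a _; exact Finset.mem_univ _
  · intro a _; exact Finset.mem_range.mpr (ZMod.val_lt a)
  · intro a ha; exact ZMod.val_cast_of_lt (Finset.mem_range.mp ha)
  · intro a _; exact ZMod.natCast_rightInverse a
  · intro a ha; rw [ZMod.val_cast_of_lt (Finset.mem_range.mp ha)]

lemma Ram_eval (n : ℤ) :
    Ram n q = if (n : ZMod q) = 0 then (q:ℂ) - 1 else -1 := by
  have hp : q.Prime := Fact.out
  have : NeZero q := ⟨hp.ne_zero⟩
  rw [Ram, sum_range_zmod]
  have key : ∀ d : ZMod q, (if Nat.gcd d.val q = 1 then ec q (d.val * n) else 0)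
      = psi q (d * n) - (if d = 0 then 1 else 0) := by
    intro d
    by_cases hd : d = 0
    · subst hd
      have h0 : Nat.gcd (0 : ZMod q).val q = q := by simp [ZMod.val_zero]
      rw [if_neg (by rw [h0]; exact hp.one_lt.ne'), if_pos rfl, zero_mul, psi_zero]
      ring
    · have hval : d.val ≠ 0 := fun h => hd (by rwa [← ZMod.val_eq_zero])
      have hgcd : Nat.gcd d.val q = 1 := by
        rw [Nat.gcd_comm]
        refine (Nat.Prime.coprime_iff_not_dvd hp).mpr ?_
        intro hdvd
        exact absurd (Nat.eq_zero_of_dvd_of_lt hdvd (ZMod.val_lt d)) hval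
      rw [if_pos hgcd, if_neg hd, sub_zero, ec_eq_psi]
      congr 1
      push_cast
      simp [ZMod.natCast_val, ZMod.cast_id]
  rw [Finset.sum_congr rfl (fun d _ => key d), Finset.sum_sub_distrib, sum_psi_mul]
  simp only [Finset.sum_ite_eq', Finset.mem_univ, if_true]
  split_ifs <;> ring

lemma mem_compl0 {a : ZMod q} : a ∈ ({0}ᶜ : Finset (ZMod q)) ↔ a ≠ 0 := by simp

lemma card_compl0 : (({0}ᶜ : Finset (ZMod q)).card : ℂ) = (q:ℂ) - 1 := by
  have h1 : (1:ℕ) ≤ q := (Fact.out : q.Prime).one_le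
  simp [Finset.card_compl, ZMod.card, Nat.cast_sub h1]

lemma sum_compl_reindex {a : ZMod q} (ha : a ≠ 0) (f : ZMod q → ℂ) :
    ∑ u ∈ ({0}ᶜ : Finset (ZMod q)), f (a * u) = ∑ u ∈ ({0}ᶜ : Finset (ZMod q)), f u := by
  refine Finset.sum_nbij' (fun u => a * u) (fun w => a⁻¹ * w) ?_ ?_ ?_ ?_ ?_
  · intro u hu; rw [mem_compl0] at *; exact mul_ne_zero ha hu
  · intro w hw; rw [mem_compl0] at *; exact mul_ne_zero (inv_ne_zero ha) hw
  · intro u _; field_simp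
  · intro w _; field_simp
  · intro u _; rfl

lemma sum_univ_reindex {a : ZMod q} (ha : a ≠ 0) (f : ZMod q → ℂ) :
    ∑ u : ZMod q, f (a * u) = ∑ u : ZMod q, f u :=
  (Fintype.sum_bijective (fun u => a * u) (mulLeft_bijective₀ a ha) _ f (fun _ => rfl))

lemma sum_compl_psi (M2 : ZMod q) :
    ∑ u ∈ ({0}ᶜ : Finset (ZMod q)), psi q (u * M2) = (if M2 = 0 then (q:ℂ) else 0) - 1 := by
  have := sum_psi_mul (q := q) M2
  rw [Fintype.sum_eq_add_sum_compl 0 (fun u => psi q (u * M2)), zero_mul, psi_zero] at this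
  linear_combination this

lemma sum_compl_chi_one_add (hq2 : q ≠ 2) :
    ∑ v ∈ ({0}ᶜ : Finset (ZMod q)), Chi q (1 + v) = -1 := by
  have h := sum_Chi_shift (q := q) hq2 1
  have h2 : ∑ a : ZMod q, Chi q (1 + a) = 0 := by
    rw [← h]; exact Finset.sum_congr rfl fun a _ => by rw [add_comm]
  rw [Fintype.sum_eq_add_sum_compl 0 (fun v => Chi q (1 + v)), add_zero, Chi_one] at h2
  linear_combination h2


lemma caseC (hq2 : q ≠ 2) (R M M1 : ZMod q) (hR : R ≠ 0) (hM : M ≠ 0) (hM1 : M1 ≠ 0) :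
    ∑ u : ZMod q, ∑ v : ZMod q, Chi q (v * (u + v * M1) * (v * R - M) * (u * R + M * M1))
      = 1 := by
  have hone : (1 : ZMod q) ≠ 0 := one_ne_zero
  obtain ⟨a, ha, haR⟩ : ∃ a : ZMod q, a ≠ 0 ∧ a * R = M :=
    ⟨M * R⁻¹, mul_ne_zero hM (inv_ne_zero hR), by field_simp⟩
  -- Step 1 : substitute u ↦ M1 * u
  have e1 : ∑ u : ZMod q, ∑ v : ZMod q,
        Chi q (v * (u + v * M1) * (v * R - M) * (u * R + M * M1))
      = ∑ u : ZMod q, ∑ v : ZMod q, Chi q (v * (u + v) * (v * R - M) * (u * R + M)) := by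
    rw [← sum_univ_reindex hM1
      (fun u => ∑ v : ZMod q, Chi q (v * (u + v * M1) * (v * R - M) * (u * R + M * M1)))]
    refine Finset.sum_congr rfl fun u _ => Finset.sum_congr rfl fun v _ => ?_
    rw [show v * ((M1 * u) + v * M1) * (v * R - M) * ((M1 * u) * R + M * M1)
        = M1 * M1 * (v * (u + v) * (v * R - M) * (u * R + M)) by ring, Chi_sq_mul hM1]
  -- Step 2 : substitute u ↦ a * u, v ↦ a * v  with a = M / R
  have e2 : ∑ u : ZMod q, ∑ v : ZMod q, Chi q (v * (u + v) * (v * R - M) * (u * R + M))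
      = ∑ u : ZMod q, ∑ v : ZMod q, Chi q (v * (u + v) * (v - 1) * (u + 1)) := by
    rw [← sum_univ_reindex ha
      (fun u => ∑ v : ZMod q, Chi q (v * (u + v) * (v * R - M) * (u * R + M)))]
    refine Finset.sum_congr rfl fun u _ => ?_
    rw [← sum_univ_reindex ha
      (fun v => Chi q (v * ((a * u) + v) * (v * R - M) * ((a * u) * R + M)))]
    refine Finset.sum_congr rfl fun v _ => ?_
    rw [show (a * v) * ((a * u) + (a * v)) * ((a * v) * R - M) * ((a * u) * R + M)
        = a * a * ((a * R) * (a * R) * (v * (u + v) * (v - 1) * (u + 1))) by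
          rw [← haR]; ring]
    rw [Chi_sq_mul ha, haR, Chi_sq_mul hM]
  -- Step 3 : substitute u ↦ v * u  (for v ≠ 0), both sides vanish at v = 0
  have e3 : ∑ u : ZMod q, ∑ v : ZMod q, Chi q (v * (u + v) * (v - 1) * (u + 1))
      = ∑ v : ZMod q, ∑ u : ZMod q, Chi q ((u + 1) * (v - 1) * (u * v + 1)) := by
    rw [Finset.sum_comm]
    refine Finset.sum_congr rfl fun v _ => ?_
    by_cases hv : v = 0
    · subst hv
      have l : ∀ u : ZMod q, Chi q ((0:ZMod q) * (u + 0) * (0 - 1) * (u + 1)) = 0 := by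
        intro u; rw [zero_mul, zero_mul, zero_mul, Chi_zero]
      have r : ∑ u : ZMod q, Chi q ((u + 1) * ((0:ZMod q) - 1) * (u * 0 + 1)) = 0 := by
        have : ∀ u : ZMod q, Chi q ((u + 1) * ((0:ZMod q) - 1) * (u * 0 + 1))
            = Chi q (0 - 1) * Chi q (u + 1) := by
          intro u
          rw [show (u + 1) * ((0:ZMod q) - 1) * (u * 0 + 1) = ((0:ZMod q) - 1) * (u + 1) by
            ring, Chi_mul]
        rw [Finset.sum_congr rfl fun u _ => this u, ← Finset.mul_sum,
          sum_Chi_shift (q := q) hq2 1, mul_zero]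
      rw [Finset.sum_congr rfl fun u _ => l u, Finset.sum_const, smul_zero, r]
    · rw [← sum_univ_reindex hv (fun u => Chi q (v * (u + v) * (v - 1) * (u + 1)))]
      refine Finset.sum_congr rfl fun u _ => ?_
      rw [show v * ((v * u) + v) * (v - 1) * ((v * u) + 1)
          = v * v * ((u + 1) * (v - 1) * (u * v + 1)) by ring, Chi_sq_mul hv]
  -- Step 4 : evaluate, splitting on u
  have e4 : ∀ u : ZMod q, ∑ v : ZMod q, Chi q ((u + 1) * (v - 1) * (u * v + 1))
      = - Chi q (u * (u + 1)) := by
    intro u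
    by_cases hu : u = 0
    · subst hu
      have l : ∀ v : ZMod q, Chi q (((0:ZMod q) + 1) * (v - 1) * (0 * v + 1)) = Chi q (v + (-1))
          := by
        intro v; congr 1; ring
      rw [Finset.sum_congr rfl fun v _ => l v, sum_Chi_shift (q := q) hq2 (-1), zero_mul,
        Chi_zero, neg_zero]
    · have key : ∀ v : ZMod q, Chi q ((u + 1) * (v - 1) * (u * v + 1))
          = Chi q (u * (u + 1)) * Chi q ((v - 1) * (v + u⁻¹)) := by
        intro v
        rw [← Chi_mul]
        congr 1
        field_simp
      rw [Finset.sum_congr rfl fun v _ => key v, ← Finset.mul_sum]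
      have shift : ∑ v : ZMod q, Chi q ((v - 1) * (v + u⁻¹))
          = ∑ v : ZMod q, Chi q (v * (v + (1 + u⁻¹))) := by
        rw [← Fintype.sum_bijective (fun v : ZMod q => v + 1) (Equiv.addRight (1:ZMod q)).bijective
          (fun v => Chi q (v * (v + (1 + u⁻¹)))) (fun v => Chi q ((v - 1) * (v + u⁻¹))) ?_]
        intro v
        congr 1
        ring
      rw [shift, sum_chi_quad hq2]
      by_cases hc : (1 : ZMod q) + u⁻¹ = 0
      · rw [if_pos hc]
        have hu1 : u = -1 := by
          have : u⁻¹ = -1 := by linear_combination hc - 1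
          rw [← inv_inv u, this]
          norm_num
        rw [hu1]
        norm_num [Chi_zero]
      · rw [if_neg hc, mul_neg_one]
  calc ∑ u : ZMod q, ∑ v : ZMod q,
        Chi q (v * (u + v * M1) * (v * R - M) * (u * R + M * M1))
      = ∑ v : ZMod q, ∑ u : ZMod q, Chi q ((u + 1) * (v - 1) * (u * v + 1)) := by
        rw [e1, e2, e3]
    _ = ∑ u : ZMod q, (- Chi q (u * (u + 1))) := by
        rw [Finset.sum_comm]
        exact Finset.sum_congr rfl fun u _ => e4 u
    _ = 1 := by
        rw [Finset.sum_neg_distrib, sum_chi_quad hq2 1, if_neg hone]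
        norm_num

lemma key (hq2 : q ≠ 2) (R M M1 M2 : ZMod q) (hR : R ≠ 0) (h : M * M1 * M2 = 0) :
    ∑ u : ZMod q, ∑ v : ZMod q,
      Chi q (v * (u + v * M1) * (v * R - M) * (u * R + M * M1)) * psi q (u * M2)
    = (if M = 0 then (q:ℂ) - 1 else -1) * (if M1 = 0 then (q:ℂ) - 1 else -1) *
      (if M2 = 0 then (q:ℂ) - 1 else -1) / ((q:ℂ) - 1) := by
  have hp : q.Prime := Fact.out
  have hq3 : 3 ≤ q := by have := hp.two_le; omega
  have hq1 : (q:ℂ) - 1 ≠ 0 := by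
    refine sub_ne_zero.mpr fun hc => ?_
    have : q = 1 := by exact_mod_cast hc
    omega
  by_cases hM : M = 0
  · subst hM
    by_cases hM1 : M1 = 0
    · -- case A1 : M = 0, M1 = 0
      subst hM1
      have inner : ∀ u : ZMod q,
          ∑ v : ZMod q, Chi q (v * (u + v * 0) * (v * R - 0) * (u * R + 0 * 0)) * psi q (u * M2)
          = (if u = 0 then 0 else (q:ℂ) - 1) * psi q (u * M2) := by
        intro u
        have e : ∀ v : ZMod q, v * (u + v * 0) * (v * R - 0) * (u * R + 0 * 0)
            = u * u * (v * v * (R * R * 1)) := by intro v; ring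
        simp only [e]
        by_cases hu : u = 0
        · subst hu
          simp only [zero_mul, Chi_zero, if_pos]
          simp
        · rw [if_neg hu, ← Finset.sum_mul]
          congr 1
          have e2 : ∀ v : ZMod q, Chi q (u * u * (v * v * (R * R * 1)))
              = Chi q (v * v * (R * R * 1)) := fun v => Chi_sq_mul hu _
          simp only [e2]
          rw [Fintype.sum_eq_add_sum_compl 0]
          have z : Chi q ((0:ZMod q) * 0 * (R * R * 1)) = 0 := by
            rw [zero_mul, zero_mul, Chi_zero]
          rw [z, zero_add]
          have e3 : ∀ v ∈ ({0}ᶜ : Finset (ZMod q)), Chi q (v * v * (R * R * 1)) = 1 := by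
            intro v hv
            rw [Chi_sq_mul (mem_compl0.mp hv), Chi_sq_mul hR, Chi_one]
          rw [Finset.sum_congr rfl e3, Finset.sum_const, nsmul_eq_mul, mul_one, card_compl0]
      rw [Finset.sum_congr rfl fun u _ => inner u, Fintype.sum_eq_add_sum_compl 0, if_pos rfl,
        zero_mul, zero_add]
      have e4 : ∀ u ∈ ({0}ᶜ : Finset (ZMod q)),
          (if u = 0 then 0 else (q:ℂ) - 1) * psi q (u * M2)
          = ((q:ℂ) - 1) * psi q (u * M2) := by
        intro u hu; rw [if_neg (mem_compl0.mp hu)]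
      rw [Finset.sum_congr rfl e4, ← Finset.mul_sum, sum_compl_psi]
      rcases eq_or_ne M2 0 with h2 | h2
      · simp only [h2, eq_self_iff_true, if_true]
        field_simp
        try ring
      · simp only [if_neg h2, eq_self_iff_true, if_true]
        field_simp
        try ring
    · -- case A2 : M = 0, M1 ≠ 0
      have inner : ∀ u : ZMod q,
          ∑ v : ZMod q, Chi q (v * (u + v * M1) * (v * R - 0) * (u * R + 0 * M1)) * psi q (u * M2)
          = (-1 : ℂ) * psi q (u * M2) - (if u = 0 then -psi q (u * M2) else 0) := by
        intro u
        by_cases hu : u = 0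
        · subst hu
          have e : ∀ v : ZMod q, Chi q (v * ((0:ZMod q) + v * M1) * (v * R - 0) * (0 * R + 0 * M1))
              * psi q ((0:ZMod q) * M2) = 0 := by
            intro v
            rw [show v * ((0:ZMod q) + v * M1) * (v * R - 0) * (0 * R + 0 * M1)
              = (0:ZMod q) by ring, Chi_zero, zero_mul]
          rw [Finset.sum_congr rfl fun v _ => e v, Finset.sum_const, smul_zero, if_pos rfl]
          ring
        · rw [if_neg hu, sub_zero, ← Finset.sum_mul]
          congr 1
          rw [Fintype.sum_eq_add_sum_compl 0]
          have z : Chi q ((0:ZMod q) * (u + 0 * M1) * (0 * R - 0) * (u * R + 0 * M1)) = 0 := by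
            rw [show (0:ZMod q) * (u + 0 * M1) * (0 * R - 0) * (u * R + 0 * M1) = 0 by ring,
              Chi_zero]
          rw [z, zero_add]
          have e : ∀ v ∈ ({0}ᶜ : Finset (ZMod q)),
              Chi q (v * (u + v * M1) * (v * R - 0) * (u * R + 0 * M1))
              = Chi q (1 + (M1 * u⁻¹) * v) := by
            intro v hv
            rw [show v * (u + v * M1) * (v * R - 0) * (u * R + 0 * M1)
                = (u * u) * ((v * v) * ((R * R) * (1 + (M1 * u⁻¹) * v))) by
              field_simp; ring]
            rw [Chi_sq_mul hu, Chi_sq_mul (mem_compl0.mp hv), Chi_sq_mul hR]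
          rw [Finset.sum_congr rfl e,
            show ∑ v ∈ ({0}ᶜ : Finset (ZMod q)), Chi q (1 + (M1 * u⁻¹) * v)
              = ∑ v ∈ ({0}ᶜ : Finset (ZMod q)), Chi q (1 + v) from
              sum_compl_reindex (mul_ne_zero hM1 (inv_ne_zero hu)) (fun x => Chi q (1 + x)),
            sum_compl_chi_one_add hq2]
      rw [Finset.sum_congr rfl fun u _ => inner u, Finset.sum_sub_distrib, ← Finset.mul_sum]
      rw [Fintype.sum_eq_add_sum_compl 0 (fun u => psi q (u * M2)), zero_mul, psi_zero,
        sum_compl_psi]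
      have : ∑ u : ZMod q, (if u = 0 then -psi q (u * M2) else 0) = -1 := by
        rw [Finset.sum_ite_eq' Finset.univ (0 : ZMod q) (fun u => -psi q (u * M2))]
        simp [psi_zero]
      rw [this, if_neg hM1]
      rcases eq_or_ne M2 0 with h2 | h2
      · simp only [h2, eq_self_iff_true, if_true]
        field_simp
        try ring
      · simp only [if_neg h2, eq_self_iff_true, if_true]
        field_simp
        try ring
  · by_cases hM1 : M1 = 0
    · -- case B : M ≠ 0, M1 = 0
      subst hM1
      obtain ⟨c, hc, hcR⟩ : ∃ c : ZMod q, c ≠ 0 ∧ R * c = -M :=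
        ⟨-(M * R⁻¹), neg_ne_zero.mpr (mul_ne_zero hM (inv_ne_zero hR)), by field_simp⟩
      have inner : ∀ u : ZMod q,
          ∑ v : ZMod q, Chi q (v * (u + v * 0) * (v * R - M) * (u * R + M * 0)) * psi q (u * M2)
          = (if u = 0 then 0 else (-1:ℂ)) * psi q (u * M2) := by
        intro u
        by_cases hu : u = 0
        · subst hu
          have e : ∀ v : ZMod q,
              Chi q (v * ((0:ZMod q) + v * 0) * (v * R - M) * ((0:ZMod q) * R + M * 0)) *
                psi q ((0:ZMod q) * M2) = 0 := by
            intro v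
            rw [show v * ((0:ZMod q) + v * 0) * (v * R - M) * ((0:ZMod q) * R + M * 0) = 0 by
              ring, Chi_zero, zero_mul]
          rw [Finset.sum_congr rfl fun v _ => e v, Finset.sum_const, smul_zero]
          simp
        · rw [if_neg hu, ← Finset.sum_mul]
          congr 1
          have e : ∀ v : ZMod q, Chi q (v * (u + v * 0) * (v * R - M) * (u * R + M * 0))
              = Chi q (v * (v + c)) := by
            intro v
            rw [show v * (u + v * 0) * (v * R - M) * (u * R + M * 0)
                = (u * u) * ((R * R) * (v * (v + c))) by rw [← neg_eq_iff_eq_neg.mpr hcR]; ring,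
              Chi_sq_mul hu, Chi_sq_mul hR]
          rw [Finset.sum_congr rfl fun v _ => e v, sum_chi_quad hq2 c, if_neg hc]
      rw [Finset.sum_congr rfl fun u _ => inner u, Fintype.sum_eq_add_sum_compl 0, if_pos rfl,
        zero_mul, zero_add]
      have e4 : ∀ u ∈ ({0}ᶜ : Finset (ZMod q)),
          (if u = 0 then 0 else (-1:ℂ)) * psi q (u * M2)
          = (-1:ℂ) * psi q (u * M2) := by
        intro u hu; rw [if_neg (mem_compl0.mp hu)]
      rw [Finset.sum_congr rfl e4, ← Finset.mul_sum, sum_compl_psi]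
      rw [if_neg hM]
      rcases eq_or_ne M2 0 with h2 | h2
      · simp only [h2, eq_self_iff_true, if_true]
        field_simp
        try ring
      · simp only [if_neg h2, eq_self_iff_true, if_true]
        field_simp
        try ring
    · -- case C : M ≠ 0, M1 ≠ 0, so M2 = 0
      have hM2 : M2 = 0 := by
        rcases mul_eq_zero.mp h with h' | h'
        · rcases mul_eq_zero.mp h' with h'' | h''
          · exact absurd h'' hM
          · exact absurd h'' hM1
        · exact h'
      subst hM2
      have e : ∀ u v : ZMod q,
          Chi q (v * (u + v * M1) * (v * R - M) * (u * R + M * M1)) * psi q (u * 0)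
          = Chi q (v * (u + v * M1) * (v * R - M) * (u * R + M * M1)) := by
        intro u v; rw [mul_zero, psi_zero, mul_one]
      rw [Finset.sum_congr rfl fun u _ => Finset.sum_congr rfl fun v _ => e u v]
      rw [caseC hq2 R M M1 hR hM hM1, if_neg hM, if_neg hM1, if_pos rfl]
      field_simp

end Aux

/-- Lemma 10.1, second case: for `q` an odd prime, `q ∤ r` and `q ∣ m m₁ m₂`,
`H_r(m, m₁, m₂; q) = R(m; q) R(m₁; q) R(m₂; q) / (q − 1)`. -/
theorem Hr_eval_of_dvd_mmm (q : ℕ) (hq : q.Prime) (hodd : Odd q) (r m m1 m2 : ℤ)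
    (hr : ¬ (q : ℤ) ∣ r) (hm : (q : ℤ) ∣ m * m1 * m2) :
    Hr r m m1 m2 q = Ram m q * Ram m1 q * Ram m2 q / ((q : ℂ) - 1) := by

  haveI : Fact q.Prime := ⟨hq⟩
  haveI : NeZero q := ⟨hq.ne_zero⟩
  have hq2 : q ≠ 2 := by
    rintro rfl
    exact (Nat.not_odd_iff_even.mpr (by decide)) hodd
  have hR : ((r : ZMod q)) ≠ 0 := fun hc => hr ((ZMod.intCast_zmod_eq_zero_iff_dvd r q).mp hc)
  have h0 : ((m : ZMod q)) * ((m1 : ZMod q)) * ((m2 : ZMod q)) = 0 := by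
    have := (ZMod.intCast_zmod_eq_zero_iff_dvd (m * m1 * m2) q).mpr hm
    push_cast at this
    exact this
  have lhs : Hr r m m1 m2 q = ∑ u : ZMod q, ∑ v : ZMod q,
      Chi q (v * (u + v * (m1 : ZMod q)) * (v * (r : ZMod q) - (m : ZMod q)) *
        (u * (r : ZMod q) + (m : ZMod q) * (m1 : ZMod q))) * psi q (u * (m2 : ZMod q)) := by
    rw [Hr, sum_range_zmod]
    refine Finset.sum_congr rfl fun u _ => ?_
    rw [sum_range_zmod]
    refine Finset.sum_congr rfl fun v _ => ?_
    rw [jacobi_eq_chi, ec_eq_psi]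
    congr 1
    · congr 1
      push_cast
      simp [ZMod.natCast_val, ZMod.cast_id]
    · congr 1
      push_cast
      simp [ZMod.natCast_val, ZMod.cast_id]
  rw [lhs, key hq2 (r : ZMod q) (m : ZMod q) (m1 : ZMod q) (m2 : ZMod q) hR h0,
    Ram_eval, Ram_eval, Ram_eval]
end

section
/- Let q ≥ 1 be odd and squarefree. Then Σ_{u, v mod q, u v ≡ 1 (mod q)} χ_q( u v (u + 1)(v + 1) ) = μ(q) χ_q(−1), where μ is the Möbius function. -/
section AuxSumUV
open Finset

-- the character χ_q on ZMod q
def chi (q : ℕ) (x : ZMod q) : ℤ := jacobiSym x.val q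

lemma jac_nat_congr (q : ℕ) {a b : ℕ} (h : (a : ZMod q) = (b : ZMod q)) :
    jacobiSym a q = jacobiSym b q := by
  have h' := (ZMod.natCast_eq_natCast_iff' a b q).mp h
  apply jacobiSym.mod_left'
  rw [← Int.natCast_mod, ← Int.natCast_mod, h']

lemma chi_natCast (q : ℕ) [NeZero q] (x : ZMod q) : chi q x = jacobiSym (x.val : ℤ) q := rfl

lemma chi_mul (q : ℕ) [NeZero q] (x y : ZMod q) : chi q (x * y) = chi q x * chi q y := by
  rw [chi, chi, chi, ← jacobiSym.mul_left, ← Nat.cast_mul]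
  apply jac_nat_congr
  simp [ZMod.natCast_val, ZMod.cast_id]

lemma chi_one (q : ℕ) [NeZero q] : chi q 1 = 1 := by
  rw [chi, jac_nat_congr q (b := 1) (by simp [ZMod.natCast_val, ZMod.cast_id]),
    Nat.cast_one, jacobiSym.one_left]

lemma chi_sq_unit (q : ℕ) [NeZero q] (x : ZMod q) (h : IsUnit x) : chi q x ^ 2 = 1 := by
  obtain ⟨u, rfl⟩ := h
  refine jacobiSym.sq_one ?_
  rw [Int.gcd_natCast_natCast]
  exact ZMod.val_coe_unit_coprime u

lemma chi_zero_of_not_unit (q : ℕ) [NeZero q] (x : ZMod q) (h : ¬ IsUnit x) : chi q x = 0 := by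
  rw [chi]
  rw [jacobiSym.eq_zero_iff_not_coprime]
  rw [Int.gcd_natCast_natCast]
  intro hc
  apply h
  have : IsUnit ((x.val : ZMod q)) := (ZMod.isUnit_iff_coprime x.val q).mpr hc
  simpa [ZMod.natCast_val, ZMod.cast_id] using this

lemma chi_inv (q : ℕ) [NeZero q] (x : ZMod q) (h : IsUnit x) : chi q x⁻¹ = chi q x := by
  have h1 : x * x⁻¹ = 1 := ZMod.mul_inv_of_unit x h
  have h2 : chi q x * chi q x⁻¹ = 1 := by rw [← chi_mul, h1, chi_one]
  have h3 := chi_sq_unit q x h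
  calc chi q x⁻¹ = chi q x ^ 2 * chi q x⁻¹ := by rw [h3]; ring
    _ = chi q x * (chi q x * chi q x⁻¹) := by ring
    _ = chi q x := by rw [h2, mul_one]

/-- the single-variable sum -/
def Tsum (q : ℕ) [NeZero q] : ℤ := ∑ x : ZMod q, chi q (x * (x + 1) ^ 2)

lemma chi_prime (p : ℕ) [Fact p.Prime] (x : ZMod p) :
    chi p x = quadraticChar (ZMod p) x := by
  rw [chi, ← jacobiSym.legendreSym.to_jacobiSym, legendreSym]
  norm_cast
  rw [ZMod.natCast_val, ZMod.cast_id]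

lemma Tsum_prime (p : ℕ) [NeZero p] (hp : p.Prime) (hodd : Odd p) :
    Tsum p = -(jacobiSym (-1) p) := by
  haveI : Fact p.Prime := ⟨hp⟩
  haveI : NeZero p := ⟨hp.ne_zero⟩
  have hp2 : ringChar (ZMod p) ≠ 2 := by
    rw [ZMod.ringChar_zmod_n]
    rintro rfl
    rcases hodd with ⟨k, hk⟩
    omega
  have key : ∀ x : ZMod p, chi p (x * (x + 1) ^ 2) =
      quadraticChar (ZMod p) x * quadraticChar (ZMod p) (x + 1) ^ 2 := by
    intro x
    rw [chi_prime, map_mul, map_pow]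
  have hm1 : jacobiSym (-1) p = quadraticChar (ZMod p) (-1) := by
    rw [← jacobiSym.legendreSym.to_jacobiSym, legendreSym]
    push_cast
    ring_nf
  rw [Tsum.eq_def]
  simp_rw [key]
  rw [← Finset.add_sum_erase _ _ (Finset.mem_univ (-1 : ZMod p))]
  have : quadraticChar (ZMod p) (-1) * quadraticChar (ZMod p) ((-1) + 1) ^ 2 = 0 := by
    simp
  rw [this, zero_add]
  have h2 : ∀ x ∈ Finset.univ.erase (-1 : ZMod p),
      quadraticChar (ZMod p) x * quadraticChar (ZMod p) (x + 1) ^ 2 =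
      quadraticChar (ZMod p) x := by
    intro x hx
    rw [quadraticChar_sq_one, mul_one]
    intro hx0
    exact (Finset.mem_erase.mp hx).1 (by linear_combination (norm := ring_nf) hx0)
  rw [Finset.sum_congr rfl h2]
  have h3 : ∑ x ∈ Finset.univ.erase (-1 : ZMod p), quadraticChar (ZMod p) x =
      (∑ x : ZMod p, quadraticChar (ZMod p) x) - quadraticChar (ZMod p) (-1) := by
    rw [← Finset.add_sum_erase _ _ (Finset.mem_univ (-1 : ZMod p))]
    ring
  rw [h3, quadraticChar_sum_zero hp2, hm1]
  ring

lemma chi_split (a b : ℕ) [NeZero a] [NeZero b] (h : Nat.Coprime a b) (z : ZMod (a * b)) :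
    chi (a * b) z =
      chi a (ZMod.chineseRemainder h z).1 * chi b (ZMod.chineseRemainder h z).2 := by
  haveI : NeZero (a * b) := ⟨mul_ne_zero (NeZero.ne a) (NeZero.ne b)⟩
  have hfst : ((ZMod.chineseRemainder h z).1 : ZMod a) = ZMod.cast z := by
    simp [ZMod.chineseRemainder, Prod.fst_zmod_cast]
  have hsnd : ((ZMod.chineseRemainder h z).2 : ZMod b) = ZMod.cast z := by
    simp [ZMod.chineseRemainder, Prod.snd_zmod_cast]
  rw [chi, chi, chi, jacobiSym.mul_right' _ (NeZero.ne a) (NeZero.ne b)]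
  congr 1
  · apply jac_nat_congr
    rw [ZMod.natCast_val, ZMod.natCast_val, ZMod.cast_id, hfst]
  · apply jac_nat_congr
    rw [ZMod.natCast_val, ZMod.natCast_val, ZMod.cast_id, hsnd]

lemma Tsum_mul (a b : ℕ) [NeZero a] [NeZero b] (h : Nat.Coprime a b) :
    Tsum (a * b) = Tsum a * Tsum b := by
  haveI : NeZero (a * b) := ⟨mul_ne_zero (NeZero.ne a) (NeZero.ne b)⟩
  set e := ZMod.chineseRemainder h with he
  have step : ∀ x : ZMod (a * b), chi (a * b) (x * (x + 1) ^ 2) =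
      chi a ((e x).1 * ((e x).1 + 1) ^ 2) * chi b ((e x).2 * ((e x).2 + 1) ^ 2) := by
    intro x
    rw [chi_split a b h]
    have hmap : e (x * (x + 1) ^ 2) = e x * (e x + 1) ^ 2 := by
      rw [map_mul, map_pow, map_add, map_one]
    rw [hmap]
    rfl
  rw [Tsum.eq_def]
  simp_rw [step]
  rw [Fintype.sum_bijective e e.bijective _
    (fun p : ZMod a × ZMod b => chi a (p.1 * (p.1 + 1) ^ 2) * chi b (p.2 * (p.2 + 1) ^ 2))
    (fun x => rfl)]
  rw [Fintype.sum_prod_type]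
  rw [Tsum.eq_def, Tsum.eq_def, Finset.sum_mul_sum]

lemma Tsum_eq (q : ℕ) : ∀ (_ : Odd q) (_ : Squarefree q) (_ : NeZero q),
    Tsum q = (ArithmeticFunction.moebius q : ℤ) * jacobiSym (-1) q := by
  induction q using Nat.strong_induction_on with
  | _ q ih =>
  intro hodd hsf inst
  rcases eq_or_ne q 1 with rfl | hq1
  · rw [Tsum.eq_def]
    simp [chi]
  · set p := q.minFac with hpdef
    have hp : p.Prime := Nat.minFac_prime hq1
    have hpd : p ∣ q := Nat.minFac_dvd q
    obtain ⟨m, hm⟩ : ∃ m, q = p * m := hpd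
    haveI : NeZero m := ⟨fun h => NeZero.ne q (by rw [hm, h, mul_zero])⟩
    haveI : NeZero p := ⟨hp.ne_zero⟩
    have hoddp : Odd p ∧ Odd m := by
      rw [hm, Nat.odd_mul] at hodd; exact hodd
    have hcop : Nat.Coprime p m := by
      rw [hp.coprime_iff_not_dvd]
      intro hdvd
      have : p * p ∣ q := by
        rw [hm]; exact mul_dvd_mul_left p hdvd
      exact hp.not_isUnit (hsf p this)
    have hmlt : m < q := by
      have h2 : 2 ≤ p := hp.two_le
      have hm0 : m ≠ 0 := NeZero.ne m
      nlinarith [Nat.pos_of_ne_zero hm0]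
    have hsfm : Squarefree m := hsf.squarefree_of_dvd ⟨p, by rw [hm]; ring⟩
    have IH := ih m hmlt hoddp.2 hsfm ‹NeZero m›
    have Tp := Tsum_prime p hp hoddp.1
    have main : ∀ n : ℕ, n = p * m → ∀ _ : NeZero n,
        Tsum n = (ArithmeticFunction.moebius n : ℤ) * jacobiSym (-1) n := by
      rintro n rfl instn
      haveI := instn
      rw [Tsum_mul p m hcop, Tp, IH]
      rw [ArithmeticFunction.isMultiplicative_moebius.map_mul_of_coprime hcop,
        ArithmeticFunction.moebius_apply_prime hp,
        jacobiSym.mul_right' _ (NeZero.ne p) (NeZero.ne m)]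
      ring
    exact main q hm inst

lemma jac_int_congr (q : ℕ) {a b : ℤ} (h : (a : ZMod q) = (b : ZMod q)) :
    jacobiSym a q = jacobiSym b q :=
  jacobiSym.mod_left' ((ZMod.intCast_eq_intCast_iff' a b q).mp h)

lemma sum_range_eq_sum_zmod {M : Type*} [AddCommMonoid M] (q : ℕ) [NeZero q] (f : ℕ → M) :
    ∑ u ∈ Finset.range q, f u = ∑ x : ZMod q, f x.val := by
  cases q with
  | zero => exact absurd rfl (NeZero.ne 0)
  | succ n => exact (Fin.sum_univ_eq_sum_range (fun i => f i) (n + 1)).symm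

lemma term_eq (q : ℕ) [NeZero q] (x y : ZMod q) :
    jacobiSym ((x.val : ℤ) * y.val * ((x.val : ℤ) + 1) * ((y.val : ℤ) + 1)) q =
      chi q x * chi q y * chi q (x + 1) * chi q (y + 1) := by
  rw [jacobiSym.mul_left, jacobiSym.mul_left, jacobiSym.mul_left]
  have e1 : jacobiSym ((x.val : ℤ)) q = chi q x := rfl
  have e2 : jacobiSym ((y.val : ℤ)) q = chi q y := rfl
  have e3 : jacobiSym ((x.val : ℤ) + 1) q = chi q (x + 1) := by
    apply jac_int_congr
    push_cast [ZMod.natCast_val, ZMod.cast_id]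
    ring
  have e4 : jacobiSym ((y.val : ℤ) + 1) q = chi q (y + 1) := by
    apply jac_int_congr
    push_cast [ZMod.natCast_val, ZMod.cast_id]
    ring
  rw [e1, e2, e3, e4]

lemma double_to_T (q : ℕ) [NeZero q] :
    (∑ x : ZMod q, ∑ y : ZMod q,
      if x * y = 1 then chi q x * chi q y * chi q (x + 1) * chi q (y + 1) else 0) = Tsum q := by
  rw [Tsum.eq_def]
  refine Finset.sum_congr rfl fun x _ => ?_
  by_cases hx : IsUnit x
  · have hinv : x * x⁻¹ = 1 := ZMod.mul_inv_of_unit x hx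
    have hinv' : x⁻¹ * x = 1 := by rw [mul_comm]; exact hinv
    have hcond : ∀ y : ZMod q, x * y = 1 ↔ y = x⁻¹ := by
      intro y
      constructor
      · intro hy
        calc y = (x⁻¹ * x) * y := by rw [hinv', one_mul]
          _ = x⁻¹ * (x * y) := by ring
          _ = x⁻¹ := by rw [hy, mul_one]
      · rintro rfl; exact hinv
    simp_rw [hcond]
    rw [Finset.sum_ite_eq' Finset.univ x⁻¹
      (fun y => chi q x * chi q y * chi q (x + 1) * chi q (y + 1)), if_pos (Finset.mem_univ _)]
    have h1 : chi q x⁻¹ = chi q x := chi_inv q x hx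
    have h2 : chi q (x⁻¹ + 1) = chi q x * chi q (x + 1) := by
      have hxx : x⁻¹ + 1 = x⁻¹ * (x + 1) := by rw [mul_add, mul_one, hinv']; ring
      rw [hxx, chi_mul, h1]
    have h3 : chi q (x * (x + 1) ^ 2) = chi q x * (chi q (x + 1) * chi q (x + 1)) := by
      rw [pow_two, chi_mul, chi_mul]
    have h4 := chi_sq_unit q x hx
    rw [h1, h2, h3]
    linear_combination chi q x * chi q (x + 1) * chi q (x + 1) * h4
  · have hcond : ∀ y : ZMod q, ¬(x * y = 1) := fun y hy => hx (IsUnit.of_mul_eq_one y hy)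
    simp only [hcond, if_false]
    rw [Finset.sum_const_zero, chi_mul, chi_zero_of_not_unit q x hx, zero_mul]

end AuxSumUV

/-- for `q ≥ 1` odd squarefree,
`Σ_{u v ≡ 1 (mod q)} χ_q(u v (u+1)(v+1)) = μ(q) χ_q(−1)`. -/
theorem sum_uv_eq_one (q : ℕ) (hq : 1 ≤ q) (hodd : Odd q) (hsf : Squarefree q) :
    (∑ u ∈ Finset.range q, ∑ v ∈ Finset.range q,
        if (u * v) % q = 1 % q then
          (jacobiSym ((u : ℤ) * v * ((u : ℤ) + 1) * ((v : ℤ) + 1)) q : ℂ)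
        else 0) =
      (ArithmeticFunction.moebius q : ℂ) * (jacobiSym (-1) q : ℂ) := by
  open Finset in
  haveI : NeZero q := ⟨Nat.one_le_iff_ne_zero.mp hq⟩
  have step1 : (∑ u ∈ Finset.range q, ∑ v ∈ Finset.range q,
      if (u * v) % q = 1 % q then
        (jacobiSym ((u : ℤ) * v * ((u : ℤ) + 1) * ((v : ℤ) + 1)) q : ℂ)
      else 0) =
      ((∑ x : ZMod q, ∑ y : ZMod q,
        if x * y = 1 then chi q x * chi q y * chi q (x + 1) * chi q (y + 1) else 0 : ℤ) : ℂ) := by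
    push_cast
    rw [sum_range_eq_sum_zmod q]
    refine Finset.sum_congr rfl fun x _ => ?_
    rw [sum_range_eq_sum_zmod q]
    refine Finset.sum_congr rfl fun y _ => ?_
    have hcond : (x.val * y.val) % q = 1 % q ↔ x * y = 1 := by
      rw [← ZMod.natCast_eq_natCast_iff']
      push_cast [ZMod.natCast_val, ZMod.cast_id]
      exact Iff.rfl
    rw [if_congr hcond rfl rfl, term_eq]
    push_cast
    rfl
  rw [step1, double_to_T, Tsum_eq q hodd hsf ‹NeZero q›]
  push_cast
  ring
end
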